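/- There exists a surjective, open, continuous map f : D → G, where D = {N ⊴ F_∞ : F_∞/N is infinite and every coset of N contains infinitely many generators}, such that F_∞/N ≅ (ℕ, f(N)) for every N ∈ D. -/

import Mathlib

/-- `G : ℕ × ℕ → ℕ` is a group operation on `ℕ`. -/
def IsGroupOp (G : ℕ × ℕ → ℕ) : Prop :=
  (∀ a b c, G (G (a, b), c) = G (a, G (b, c))) ∧
  ∃ e, (∀ a, G (e, a) = a ∧ G (a, e) = a) ∧ ∀ a, ∃ b, G (a, b) = e ∧ G (b, a) = e

/-- A copy of `ℕ` used as the carrier of the group `(ℕ, G)` associated to a group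
operation `G` (a type synonym, so that the group structure induced by `G` does not
clash with the usual arithmetic structure of `ℕ`). -/
def NatCarrier : Type := ℕ

/-- The identification of `ℕ` with `NatCarrier`. -/
def NatCarrier.mk : ℕ → NatCarrier := id

/-- The group `(ℕ, G)` induced by a group operation `G` on `ℕ`. -/
noncomputable def groupOfOp (G : ℕ × ℕ → ℕ) (h : IsGroupOp G) : Group NatCarrier where
  mul a b := NatCarrier.mk (G (a, b))
  one := NatCarrier.mk h.2.choose
  inv a := NatCarrier.mk (h.2.choose_spec.2 a).choose
  mul_assoc a b c := h.1 a b c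
  one_mul a := (h.2.choose_spec.1 a).1
  mul_one a := (h.2.choose_spec.1 a).2
  inv_mul_cancel a := (h.2.choose_spec.2 a).choose_spec.2

/-- The space of group operations on `ℕ` (topology inherited from `ℕ^(ℕ×ℕ)`). -/
abbrev GroupOpSpace : Type := {G : ℕ × ℕ → ℕ // IsGroupOp G}

/-- The kernel of the marking homomorphism `F_∞ → (ℕ, G)`, `x_i ↦ i`. -/
noncomputable def markingKer (G : ℕ × ℕ → ℕ) (h : IsGroupOp G) : Subgroup (FreeGroup ℕ) := by
  letI := groupOfOp G h
  exact (FreeGroup.lift fun i => NatCarrier.mk i).ker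

lemma markingKer_normal (G : ℕ × ℕ → ℕ) (h : IsGroupOp G) : (markingKer G h).Normal := by
  letI := groupOfOp G h
  exact MonoidHom.normal_ker _

def charSet {α : Type*} (χ : α → Bool) : Set α := {x | χ x = true}

/-- `χ` codes a normal subgroup. -/
def IsNormalSubgroupChar {α : Type*} [Group α] (χ : α → Bool) : Prop :=
  ∃ H : Subgroup α, H.Normal ∧ (H : Set α) = charSet χ

/-- The space of marked groups: normal subgroups of `F_∞` as a subspace of `2^{F_∞}`. -/
abbrev MarkedSpace : Type := {χ : FreeGroup ℕ → Bool // IsNormalSubgroupChar χ}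

/-- `F_∞ ⧸ H` is isomorphic to the group `(ℕ, G)`. -/
def QuotIsoOp (H : Subgroup (FreeGroup ℕ)) (hn : H.Normal)
    (G : ℕ × ℕ → ℕ) (hG : IsGroupOp G) : Prop := by
  haveI := hn
  letI := groupOfOp G hG
  exact Nonempty ((FreeGroup ℕ ⧸ H) ≃* NatCarrier)

/-- `D`: normal subgroups `N ⊴ F_∞` with `F_∞/N` infinite and every coset of `N`
containing infinitely many generators `x_i`. -/
def Dset : Set MarkedSpace :=
  {N | (∃ f : ℕ → FreeGroup ℕ, ∀ i j, i ≠ j → N.1 (f i * (f j)⁻¹) = false) ∧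
    ∀ u : FreeGroup ℕ, {i : ℕ | N.1 (u⁻¹ * FreeGroup.of i) = true}.Infinite}

namespace Stmt18
set_option linter.unusedSectionVars false
open FreeGroup

/-- `i` is the least generator index in its coset. -/
def rep (χ : FreeGroup ℕ → Bool) (i : ℕ) : Prop :=
  ∀ j < i, χ ((of j)⁻¹ * of i) = false

instance (χ : FreeGroup ℕ → Bool) : DecidablePred (rep χ) := fun _ =>
  Nat.decidableBallLT _ _

/-- least generator index in the coset of `u`. -/
noncomputable def gidx (χ : FreeGroup ℕ → Bool) (u : FreeGroup ℕ) : ℕ :=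
  sInf {i | χ (u⁻¹ * of i) = true}

/-- index of the coset of `u` in the enumeration of cosets by least generators. -/
noncomputable def cIdx (χ : FreeGroup ℕ → Bool) (u : FreeGroup ℕ) : ℕ :=
  Nat.count (rep χ) (gidx χ u)

/-- the `a`-th representative generator index. -/
noncomputable def r (χ : FreeGroup ℕ → Bool) (a : ℕ) : ℕ := Nat.nth (rep χ) a

/-- the group operation associated to a marked subgroup. -/
noncomputable def op (χ : FreeGroup ℕ → Bool) (a b : ℕ) : ℕ :=
  cIdx χ (of (r χ a) * of (r χ b))

section Marked

variable {χ : FreeGroup ℕ → Bool} {H : Subgroup (FreeGroup ℕ)}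
  (hn : H.Normal)
  (hH : ∀ u, u ∈ H ↔ χ u = true)
  (hinf : ∀ u : FreeGroup ℕ, {i : ℕ | χ (u⁻¹ * of i) = true}.Infinite)
  (hdisc : ∃ f : ℕ → FreeGroup ℕ, ∀ i j, i ≠ j → χ (f i * (f j)⁻¹) = false)

include hH

lemma chi_one : χ 1 = true := by rw [← hH]; exact H.one_mem

lemma gidx_spec (u : FreeGroup ℕ) (hne : {i | χ (u⁻¹ * of i) = true}.Nonempty) :
    χ (u⁻¹ * of (gidx χ u)) = true ∧ ∀ j < gidx χ u, χ (u⁻¹ * of j) = false := by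
  constructor
  · exact Nat.sInf_mem hne
  · intro j hj
    by_contra hcon
    have : j ∈ {i | χ (u⁻¹ * of i) = true} := by
      simp only [Set.mem_setOf_eq]
      revert hcon; cases χ (u⁻¹ * of j) <;> simp
    have hle : gidx χ u ≤ j := Nat.sInf_le this
    omega

lemma rep_gidx (u : FreeGroup ℕ) (hne : {i | χ (u⁻¹ * of i) = true}.Nonempty) :
    rep χ (gidx χ u) := by
  obtain ⟨h1, h2⟩ := gidx_spec hH u hne
  intro j hj
  by_contra hcon
  have hji : χ ((of j)⁻¹ * of (gidx χ u)) = true := by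
    revert hcon; cases χ ((of j)⁻¹ * of (gidx χ u)) <;> simp
  have hu : u⁻¹ * of (gidx χ u) ∈ H := (hH _).mpr h1
  have hji' : (of j)⁻¹ * of (gidx χ u) ∈ H := (hH _).mpr hji
  have : u⁻¹ * of j ∈ H := by
    have := H.mul_mem hu (H.inv_mem hji')
    simpa [mul_assoc] using this
  rw [hH] at this
  rw [h2 j hj] at this
  exact Bool.false_ne_true this

/-- membership of `u⁻¹ v` in `H` only depends on cosets -/
lemma coset_congr {u v : FreeGroup ℕ} (huv : u⁻¹ * v ∈ H) (i : ℕ) :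
    χ (u⁻¹ * of i) = χ (v⁻¹ * of i) := by
  by_cases h : v⁻¹ * of i ∈ H
  · have : u⁻¹ * of i ∈ H := by
      have := H.mul_mem huv h
      simpa [mul_assoc] using this
    rw [(hH _).mp this, (hH _).mp h]
  · have h2 : u⁻¹ * of i ∉ H := by
      intro hc
      exact h (by simpa [mul_assoc] using H.mul_mem (H.inv_mem huv) hc)
    have e1 : χ (u⁻¹ * of i) = false := by
      rw [hH] at h2; revert h2; cases χ (u⁻¹ * of i) <;> simp
    have e2 : χ (v⁻¹ * of i) = false := by
      rw [hH] at h; revert h; cases χ (v⁻¹ * of i) <;> simp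
    rw [e1, e2]

lemma gidx_coset {u v : FreeGroup ℕ} (huv : u⁻¹ * v ∈ H) : gidx χ u = gidx χ v := by
  unfold gidx
  congr 1
  ext i
  simp only [Set.mem_setOf_eq, coset_congr hH huv i]

lemma cIdx_coset {u v : FreeGroup ℕ} (huv : u⁻¹ * v ∈ H) : cIdx χ u = cIdx χ v := by
  unfold cIdx; rw [gidx_coset hH huv]

end Marked

end Stmt18

namespace Stmt18
set_option linter.unusedSectionVars false
open FreeGroup

section Marked2

variable {χ : FreeGroup ℕ → Bool} {H : Subgroup (FreeGroup ℕ)}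
  (hn : H.Normal)
  (hH : ∀ u, u ∈ H ↔ χ u = true)
  (hinf : ∀ u : FreeGroup ℕ, {i : ℕ | χ (u⁻¹ * of i) = true}.Infinite)
  (hdisc : ∃ f : ℕ → FreeGroup ℕ, ∀ i j, i ≠ j → χ (f i * (f j)⁻¹) = false)

include hn hH hinf hdisc

lemma rep_infinite : (setOf (rep χ)).Infinite := by
  obtain ⟨f, hf⟩ := hdisc
  have hg : ∀ k, rep χ (gidx χ (f k)) := fun k => rep_gidx hH _ (hinf (f k)).nonempty
  have hginj : Function.Injective fun k => gidx χ (f k) := by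
    intro i j hij
    by_contra hne
    simp only at hij
    have h1 : χ ((f i)⁻¹ * of (gidx χ (f i))) = true := (gidx_spec hH _ (hinf (f i)).nonempty).1
    have h2 : χ ((f j)⁻¹ * of (gidx χ (f j))) = true := (gidx_spec hH _ (hinf (f j)).nonempty).1
    rw [hij] at h1
    have m1 : (f i)⁻¹ * of (gidx χ (f j)) ∈ H := (hH _).mpr h1
    have m2 : (f j)⁻¹ * of (gidx χ (f j)) ∈ H := (hH _).mpr h2
    have m3 : (f i)⁻¹ * f j ∈ H := by
      have := H.mul_mem m1 (H.inv_mem m2)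
      simpa [mul_assoc] using this
    have m4 : f i * (f j)⁻¹ ∈ H := by
      have := hn.conj_mem _ (H.inv_mem m3) (f i)
      simpa [mul_assoc] using this
    rw [hH] at m4
    rw [hf i j hne] at m4
    exact Bool.false_ne_true m4
  exact Set.infinite_of_injective_forall_mem hginj hg

lemma rep_r (a : ℕ) : rep χ (r χ a) :=
  Nat.nth_mem_of_infinite (rep_infinite hn hH hinf hdisc) a

lemma r_strictMono : StrictMono (r χ) :=
  Nat.nth_strictMono (rep_infinite hn hH hinf hdisc)

lemma count_r (a : ℕ) : Nat.count (rep χ) (r χ a) = a :=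
  Nat.count_nth_of_infinite (rep_infinite hn hH hinf hdisc) a

omit hn hinf hdisc in
/-- `r (cIdx u)` is the least generator in the coset of `u`. -/
lemma r_cIdx (u : FreeGroup ℕ) (hne : {i | χ (u⁻¹ * of i) = true}.Nonempty) :
    r χ (cIdx χ u) = gidx χ u :=
  Nat.nth_count (rep_gidx hH u hne)

omit hn hinf hdisc in
lemma chi_r_cIdx (u : FreeGroup ℕ) (hne : {i | χ (u⁻¹ * of i) = true}.Nonempty) :
    u⁻¹ * of (r χ (cIdx χ u)) ∈ H := by
  rw [r_cIdx hH u hne, hH]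
  exact (gidx_spec hH u hne).1

/-- `cIdx (of (r a)) = a`. -/
lemma cIdx_of_r (a : ℕ) : cIdx χ (of (r χ a)) = a := by
  have h1 : gidx χ (of (r χ a)) = r χ a := by
    apply le_antisymm
    · apply Nat.sInf_le
      simp only [Set.mem_setOf_eq, inv_mul_cancel]
      exact chi_one hH
    · by_contra hcon
      push_neg at hcon
      have hmem := Nat.sInf_mem (hinf (of (r χ a))).nonempty
      set i0 := gidx χ (of (r χ a)) with hi0
      simp only [Set.mem_setOf_eq] at hmem
      have : χ ((of i0)⁻¹ * of (r χ a)) = true := by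
        rw [← hH] at hmem ⊢
        have := H.inv_mem hmem
        simpa [hi0, gidx] using this
      have := rep_r hn hH hinf hdisc a i0 hcon
      rw [this] at ‹χ ((of i0)⁻¹ * of (r χ a)) = true›
      exact Bool.false_ne_true ‹_›
  unfold cIdx
  rw [h1]
  exact count_r hn hH hinf hdisc a

/-- quotient-to-ℕ map -/
noncomputable def eInv : (FreeGroup ℕ ⧸ H) → ℕ :=
  Quotient.lift (cIdx χ) (by
    intro u v huv
    exact cIdx_coset hH (QuotientGroup.leftRel_apply.mp huv))

omit hn hinf hdisc in
lemma eInv_mk (u : FreeGroup ℕ) : eInv (H := H) (χ := χ) hH (QuotientGroup.mk u) = cIdx χ u := rfl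

omit hn hdisc in
lemma mk_r_eInv (q : FreeGroup ℕ ⧸ H) :
    (QuotientGroup.mk (of (r χ (eInv (H := H) (χ := χ) hH q))) : FreeGroup ℕ ⧸ H) = q := by
  induction q using QuotientGroup.induction_on with
  | H u =>
    rw [eInv_mk]
    symm
    rw [QuotientGroup.eq]
    exact chi_r_cIdx hH u (hinf u).nonempty

lemma eInv_mk_r (a : ℕ) : eInv (H := H) (χ := χ) hH (QuotientGroup.mk (of (r χ a))) = a := by
  rw [eInv_mk]
  exact cIdx_of_r hn hH hinf hdisc a

lemma op_eq (a b : ℕ) :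
    op χ a b = eInv (H := H) (χ := χ) hH
      ((QuotientGroup.mk (of (r χ a)) : FreeGroup ℕ ⧸ H) * QuotientGroup.mk (of (r χ b))) := rfl

lemma op_isGroupOp : IsGroupOp (fun p => op χ p.1 p.2) := by
  set e : ℕ → FreeGroup ℕ ⧸ H := fun a => QuotientGroup.mk (of (r χ a)) with he
  have hei : ∀ q, e (eInv (H := H) (χ := χ) hH q) = q := mk_r_eInv hH hinf
  have hie : ∀ a, eInv (H := H) (χ := χ) hH (e a) = a := eInv_mk_r hn hH hinf hdisc
  have hop : ∀ a b, op χ a b = eInv (H := H) (χ := χ) hH (e a * e b) := fun a b => rfl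
  constructor
  · intro a b c
    simp only [hop, hei]
    rw [mul_assoc]
  · refine ⟨eInv (H := H) (χ := χ) hH 1, fun a => ?_, fun a => ?_⟩
    · constructor
      · simp only [hop, hei, one_mul]; exact hie a
      · simp only [hop, hei, mul_one]; exact hie a
    · refine ⟨eInv (H := H) (χ := χ) hH (e a)⁻¹, ?_, ?_⟩
      · simp only [hop, hei, mul_inv_cancel]
      · simp only [hop, hei, inv_mul_cancel]

lemma quotIso : QuotIsoOp H hn (fun p => op χ p.1 p.2) (op_isGroupOp hn hH hinf hdisc) := by
  unfold QuotIsoOp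
  letI := groupOfOp (fun p => op χ p.1 p.2) (op_isGroupOp hn hH hinf hdisc)
  set e : ℕ → FreeGroup ℕ ⧸ H := fun a => QuotientGroup.mk (of (r χ a)) with he
  have hei : ∀ q, e (eInv (H := H) (χ := χ) hH q) = q := mk_r_eInv hH hinf
  have hie : ∀ a, eInv (H := H) (χ := χ) hH (e a) = a := eInv_mk_r hn hH hinf hdisc
  refine ⟨MulEquiv.mk ⟨fun q => NatCarrier.mk (eInv (H := H) (χ := χ) hH q),
    fun a => e a, ?_, ?_⟩ ?_⟩
  · intro q; exact hei q
  · intro a; exact hie a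
  · intro q1 q2
    show NatCarrier.mk (eInv (H := H) (χ := χ) hH (q1 * q2)) =
      NatCarrier.mk (op χ (eInv (H := H) (χ := χ) hH q1) (eInv (H := H) (χ := χ) hH q2))
    have : op χ (eInv (H := H) (χ := χ) hH q1) (eInv (H := H) (χ := χ) hH q2)
        = eInv (H := H) (χ := χ) hH (q1 * q2) := by
      rw [show op χ _ _ = eInv (H := H) (χ := χ) hH (e _ * e _) from rfl, hei, hei]
    rw [this]

end Marked2

end Stmt18

namespace Stmt18
set_option linter.unusedSectionVars false
open FreeGroup

/-- counting helper -/
lemma count_step (p : ℕ → Prop) [DecidablePred p] (n n' : ℕ) (h : n < n') (hpn : p n)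
    (hno : ∀ k, n < k → k < n' → ¬ p k) : Nat.count p n' = Nat.count p n + 1 := by
  induction n' with
  | zero => omega
  | succ t ih =>
    rcases Nat.lt_or_ge n t with ht | ht
    · rw [Nat.count_succ, ih ht (fun k h1 h2 => hno k h1 (by omega)), if_neg (hno t ht (by omega))]
    · have : n = t := by omega
      subst this
      rw [Nat.count_succ, if_pos hpn]

lemma count_congr (p q : ℕ → Prop) [DecidablePred p] [DecidablePred q] (n : ℕ)
    (hpq : ∀ i < n, (p i ↔ q i)) : Nat.count p n = Nat.count q n := by
  induction n with
  | zero => simp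
  | succ t ih =>
    rw [Nat.count_succ, Nat.count_succ, ih (fun i hi => hpq i (by omega))]
    by_cases hp : p t
    · rw [if_pos hp, if_pos ((hpq t (by omega)).mp hp)]
    · rw [if_neg hp, if_neg (fun hq => hp ((hpq t (by omega)).mpr hq))]

noncomputable def oneG (G : ℕ × ℕ → ℕ) (h : IsGroupOp G) : ℕ := h.2.choose

noncomputable def invG (G : ℕ × ℕ → ℕ) (h : IsGroupOp G) (a : ℕ) : ℕ :=
  (h.2.choose_spec.2 a).choose

noncomputable def letterVal (G : ℕ × ℕ → ℕ) (h : IsGroupOp G) (c : ℕ → ℕ) (x : ℕ × Bool) : ℕ :=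
  cond x.2 (c x.1) (invG G h (c x.1))

noncomputable def wEval (G : ℕ × ℕ → ℕ) (h : IsGroupOp G) (c : ℕ → ℕ) :
    List (ℕ × Bool) → ℕ
  | [] => oneG G h
  | x :: L => G (letterVal G h c x, wEval G h c L)

section KerCon

variable (G : ℕ × ℕ → ℕ) (h : IsGroupOp G) (c : ℕ → ℕ)

lemma lift_eval (L : List (ℕ × Bool)) :
    (by letI := groupOfOp G h;
        exact (FreeGroup.lift fun i => NatCarrier.mk (c i)) (FreeGroup.mk L))
      = NatCarrier.mk (wEval G h c L) := by
  letI := groupOfOp G h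
  induction L with
  | nil =>
    show (FreeGroup.lift fun i => NatCarrier.mk (c i)) (FreeGroup.mk []) = _
    have : (FreeGroup.mk [] : FreeGroup ℕ) = 1 := rfl
    rw [this, _root_.map_one]
    rfl
  | cons x L ih =>
    show (FreeGroup.lift fun i => NatCarrier.mk (c i)) (FreeGroup.mk (x :: L)) = _
    have hsplit : (FreeGroup.mk (x :: L) : FreeGroup ℕ) = FreeGroup.mk [x] * FreeGroup.mk L := by
      rw [FreeGroup.mul_mk]; rfl
    rw [hsplit, _root_.map_mul, ih]
    obtain ⟨i, b⟩ := x
    cases b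
    · have hx : (FreeGroup.mk [(i, false)] : FreeGroup ℕ) = (FreeGroup.of i)⁻¹ := by
        show FreeGroup.mk [(i,false)] = (FreeGroup.mk [(i,true)])⁻¹
        rw [FreeGroup.inv_mk]; rfl
      rw [hx, _root_.map_inv, FreeGroup.lift_apply_of]
      rfl
    · have hx : (FreeGroup.mk [(i, true)] : FreeGroup ℕ) = FreeGroup.of i := rfl
      rw [hx, FreeGroup.lift_apply_of]
      rfl

/-- the characteristic function of the marking kernel of `x_i ↦ c i`. -/
noncomputable def kerChi : FreeGroup ℕ → Bool :=
  fun u => decide (wEval G h c u.toWord = oneG G h)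

noncomputable def kerSub : Subgroup (FreeGroup ℕ) := by
  letI := groupOfOp G h
  exact (FreeGroup.lift fun i => NatCarrier.mk (c i)).ker

lemma kerSub_normal : (kerSub G h c).Normal := by
  letI := groupOfOp G h
  exact MonoidHom.normal_ker _

lemma lift_eq_wEval (u : FreeGroup ℕ) :
    (by letI := groupOfOp G h;
        exact (FreeGroup.lift fun i => NatCarrier.mk (c i)) u)
      = NatCarrier.mk (wEval G h c u.toWord) := by
  letI := groupOfOp G h
  conv_lhs => rw [← FreeGroup.mk_toWord (x := u)]
  exact lift_eval G h c u.toWord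

lemma mem_kerSub (u : FreeGroup ℕ) : u ∈ kerSub G h c ↔ kerChi G h c u = true := by
  letI := groupOfOp G h
  have : u ∈ kerSub G h c ↔ (FreeGroup.lift fun i => NatCarrier.mk (c i)) u = 1 :=
    MonoidHom.mem_ker
  rw [this, lift_eq_wEval G h c u]
  unfold kerChi
  rw [decide_eq_true_iff]
  exact Iff.rfl

lemma kerChi_isChar : IsNormalSubgroupChar (kerChi G h c) :=
  ⟨kerSub G h c, kerSub_normal G h c, by
    ext u
    simp only [charSet, Set.mem_setOf_eq, SetLike.mem_coe]
    exact mem_kerSub G h c u⟩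

end KerCon

end Stmt18

namespace Stmt18
set_option linter.unusedSectionVars false
open FreeGroup

lemma count_eq_zero' (p : ℕ → Prop) [DecidablePred p] (n : ℕ) (hn : ∀ i < n, ¬ p i) :
    Nat.count p n = 0 := by
  induction n with
  | zero => simp
  | succ t ih =>
    rw [Nat.count_succ, if_neg (hn t (by omega)), ih (fun i hi => hn i (by omega))]

section KerCon2

variable (G : ℕ × ℕ → ℕ) (h : IsGroupOp G) (c : ℕ → ℕ)

lemma wEval_of (i : ℕ) : wEval G h c (of i).toWord = c i := by
  letI := groupOfOp G h
  have h1 := lift_eq_wEval G h c (of i)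
  rw [FreeGroup.lift_apply_of] at h1
  exact h1.symm

lemma wEval_mul (u w : FreeGroup ℕ) :
    wEval G h c (u * w).toWord = G (wEval G h c u.toWord, wEval G h c w.toWord) := by
  letI := groupOfOp G h
  have h1 := lift_eq_wEval G h c (u * w)
  rw [_root_.map_mul, lift_eq_wEval G h c u, lift_eq_wEval G h c w] at h1
  exact h1.symm

lemma wEval_one : wEval G h c (1 : FreeGroup ℕ).toWord = oneG G h := by
  letI := groupOfOp G h
  have h1 := lift_eq_wEval G h c 1
  rw [_root_.map_one] at h1
  exact h1.symm

lemma kerChi_gen (u : FreeGroup ℕ) (i : ℕ) :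
    (kerChi G h c (u⁻¹ * of i) = true) ↔ c i = wEval G h c u.toWord := by
  letI := groupOfOp G h
  rw [← mem_kerSub]
  have h1 : u⁻¹ * of i ∈ kerSub G h c ↔
      (FreeGroup.lift fun i => NatCarrier.mk (c i)) (u⁻¹ * of i) = 1 := MonoidHom.mem_ker
  rw [h1, _root_.map_mul, _root_.map_inv, FreeGroup.lift_apply_of, lift_eq_wEval G h c u,
    inv_mul_eq_one]
  show NatCarrier.mk _ = NatCarrier.mk _ ↔ _
  constructor
  · intro hh; exact congrArg id hh |>.symm
  · intro hh; exact congrArg NatCarrier.mk hh.symm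

variable (m : ℕ → ℕ) (hm1 : StrictMono m) (hm2 : ∀ a, c (m a) = a) (hm3 : ∀ i, m (c i) ≤ i)
  (hfib : ∀ a, {i : ℕ | c i = a}.Infinite)

include hm2 hm3 in
lemma sInf_fiber (a : ℕ) : sInf {i : ℕ | c i = a} = m a := by
  apply le_antisymm
  · exact Nat.sInf_le (hm2 a)
  · have hne : {i : ℕ | c i = a}.Nonempty := ⟨m a, hm2 a⟩
    have hmem := Nat.sInf_mem hne
    simp only [Set.mem_setOf_eq] at hmem
    have := hm3 (sInf {i : ℕ | c i = a})
    rw [hmem] at this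
    exact this

include hm2 hm3 in
lemma gidx_kerChi (u : FreeGroup ℕ) :
    gidx (kerChi G h c) u = m (wEval G h c u.toWord) := by
  unfold gidx
  have : {i | kerChi G h c (u⁻¹ * of i) = true} = {i : ℕ | c i = wEval G h c u.toWord} := by
    ext i; exact kerChi_gen G h c u i
  rw [this, sInf_fiber c m hm2 hm3]

include hm2 hm3 in
lemma rep_kerChi (i : ℕ) : rep (kerChi G h c) i ↔ m (c i) = i := by
  have hgen : ∀ j, (kerChi G h c ((of j)⁻¹ * of i) = true) ↔ c i = c j := by
    intro j
    rw [kerChi_gen, wEval_of]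
  constructor
  · intro hr
    have hle := hm3 i
    rcases Nat.lt_or_ge (m (c i)) i with hlt | hge
    · exfalso
      have := hr (m (c i)) hlt
      rw [Bool.eq_false_iff] at this
      exact this ((hgen (m (c i))).mpr (by rw [hm2]))
    · omega
  · intro hmi j hj
    rw [Bool.eq_false_iff]
    intro hcon
    have hcc := (hgen j).mp hcon
    have : m (c j) ≤ j := hm3 j
    rw [← hcc, hmi] at this
    omega

include hm1 hm2 hm3 in
lemma count_kerChi (a : ℕ) : Nat.count (rep (kerChi G h c)) (m a) = a := by
  induction a with
  | zero =>
    apply count_eq_zero'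
    intro i hi hrep
    have := (rep_kerChi G h c m hm2 hm3 i).mp hrep
    have h0 : m 0 ≤ m (c i) := hm1.monotone (Nat.zero_le _)
    omega
  | succ t ih =>
    rw [count_step _ (m t) (m (t+1)) (hm1 (by omega)) ((rep_kerChi G h c m hm2 hm3 _).mpr
      (by rw [hm2])) ?_, ih]
    intro k h1 h2 hrep
    have hk := (rep_kerChi G h c m hm2 hm3 k).mp hrep
    rcases Nat.lt_or_ge (c k) (t+1) with hc | hc
    · have : m (c k) ≤ m t := hm1.monotone (by omega)
      omega
    · have : m (t+1) ≤ m (c k) := hm1.monotone (by omega)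
      omega

include hm1 hm2 hm3 in
lemma r_kerChi (a : ℕ) : r (kerChi G h c) a = m a := by
  have h1 : rep (kerChi G h c) (m a) := (rep_kerChi G h c m hm2 hm3 _).mpr (by rw [hm2])
  have := Nat.nth_count h1
  rw [count_kerChi G h c m hm1 hm2 hm3 a] at this
  exact this

include hm1 hm2 hm3 in
lemma cIdx_kerChi (u : FreeGroup ℕ) :
    cIdx (kerChi G h c) u = wEval G h c u.toWord := by
  unfold cIdx
  rw [gidx_kerChi G h c m hm2 hm3 u, count_kerChi G h c m hm1 hm2 hm3]

include hm1 hm2 hm3 in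
lemma op_kerChi (a b : ℕ) : op (kerChi G h c) a b = G (a, b) := by
  unfold op
  rw [r_kerChi G h c m hm1 hm2 hm3 a, r_kerChi G h c m hm1 hm2 hm3 b,
    cIdx_kerChi G h c m hm1 hm2 hm3, wEval_mul, wEval_of, wEval_of, hm2, hm2]

include hfib in
lemma kerChi_inf (u : FreeGroup ℕ) :
    {i : ℕ | kerChi G h c (u⁻¹ * of i) = true}.Infinite := by
  have : {i : ℕ | kerChi G h c (u⁻¹ * of i) = true}
      = {i : ℕ | c i = wEval G h c u.toWord} := by
    ext i; exact kerChi_gen G h c u i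
  rw [this]
  exact hfib _

include hm2 in
lemma kerChi_disc :
    ∃ f : ℕ → FreeGroup ℕ, ∀ i j, i ≠ j → kerChi G h c (f i * (f j)⁻¹) = false := by
  refine ⟨fun k => of (m k), fun i j hij => ?_⟩
  rw [Bool.eq_false_iff]
  intro hcon
  rw [← mem_kerSub] at hcon
  letI := groupOfOp G h
  have h1 : of (m i) * (of (m j))⁻¹ ∈ kerSub G h c ↔
      (FreeGroup.lift fun i => NatCarrier.mk (c i)) (of (m i) * (of (m j))⁻¹) = 1 :=
    MonoidHom.mem_ker
  rw [h1, _root_.map_mul, _root_.map_inv, FreeGroup.lift_apply_of, FreeGroup.lift_apply_of,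
    mul_inv_eq_one, hm2, hm2] at hcon
  exact hij (congrArg id hcon)

end KerCon2

end Stmt18

namespace Stmt18
set_option linter.unusedSectionVars false
open FreeGroup

noncomputable def pairWords (M : ℕ) : List (FreeGroup ℕ) :=
  (List.range (M+1)).flatMap fun i => (List.range i).map fun j => (of j)⁻¹ * of i

noncomputable def cosetWords (u : FreeGroup ℕ) (k : ℕ) : List (FreeGroup ℕ) :=
  (List.range (k+1)).map fun i => u⁻¹ * of i

lemma mem_pairWords {M i j : ℕ} (hj : j < i) (hi : i ≤ M) :
    (of j)⁻¹ * of i ∈ pairWords M := by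
  unfold pairWords
  rw [List.mem_flatMap]
  refine ⟨i, List.mem_range.mpr (by omega), ?_⟩
  rw [List.mem_map]
  exact ⟨j, List.mem_range.mpr hj, rfl⟩

lemma mem_cosetWords {u : FreeGroup ℕ} {k i : ℕ} (hi : i ≤ k) :
    u⁻¹ * of i ∈ cosetWords u k := by
  unfold cosetWords
  rw [List.mem_map]
  exact ⟨i, List.mem_range.mpr (by omega), rfl⟩

/-- words of `χ` determining `op χ a b`. -/
noncomputable def contWords (χ : FreeGroup ℕ → Bool) (a b : ℕ) : List (FreeGroup ℕ) :=
  pairWords (max (max (r χ a) (r χ b)) (gidx χ (of (r χ a) * of (r χ b)))) ++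
    cosetWords (of (r χ a) * of (r χ b)) (gidx χ (of (r χ a) * of (r χ b)))

section Cont

variable {χ : FreeGroup ℕ → Bool} {H : Subgroup (FreeGroup ℕ)}
  (hn : H.Normal)
  (hH : ∀ u, u ∈ H ↔ χ u = true)
  (hinf : ∀ u : FreeGroup ℕ, {i : ℕ | χ (u⁻¹ * of i) = true}.Infinite)
  (hdisc : ∃ f : ℕ → FreeGroup ℕ, ∀ i j, i ≠ j → χ (f i * (f j)⁻¹) = false)

include hn hH hinf hdisc in
lemma op_congr (a b : ℕ) (χ' : FreeGroup ℕ → Bool)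
    (hagree : ∀ w ∈ contWords χ a b, χ' w = χ w) : op χ' a b = op χ a b := by
  set u : FreeGroup ℕ := of (r χ a) * of (r χ b)
  set i0 := gidx χ u
  set M := max (max (r χ a) (r χ b)) i0
  have hraM : r χ a ≤ M := le_max_of_le_left (le_max_left _ _)
  have hrbM : r χ b ≤ M := le_max_of_le_left (le_max_right _ _)
  have hi0M : i0 ≤ M := le_max_right _ _
  have hpair : ∀ j i : ℕ, j < i → i ≤ M → χ' ((of j)⁻¹ * of i) = χ ((of j)⁻¹ * of i) :=
    fun j i hj hi => hagree _ (List.mem_append.mpr (Or.inl (mem_pairWords hj hi)))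
  have h_u : ∀ i ≤ i0, χ' (u⁻¹ * of i) = χ (u⁻¹ * of i) :=
    fun i hi => hagree _ (List.mem_append.mpr (Or.inr (mem_cosetWords hi)))
  have hrep : ∀ i ≤ M, (rep χ' i ↔ rep χ i) := by
    intro i hi
    unfold rep
    exact forall_congr' fun j => forall_congr' fun hj => by rw [hpair j i hj hi]
  have hcount : ∀ n, n ≤ M + 1 → Nat.count (rep χ') n = Nat.count (rep χ) n := fun n hn' =>
    count_congr _ _ n (fun i hi => hrep i (by omega))
  have hra : ∀ x : ℕ, r χ x ≤ M → r χ' x = r χ x := by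
    intro x hx
    have h1 : rep χ' (r χ x) := (hrep _ hx).mpr (rep_r hn hH hinf hdisc x)
    have h2 := Nat.nth_count h1
    rw [hcount _ (by omega), count_r hn hH hinf hdisc x] at h2
    exact h2
  have hspec := gidx_spec hH u (hinf u).nonempty
  have hmem0 : χ' (u⁻¹ * of i0) = true := by rw [h_u i0 le_rfl]; exact hspec.1
  have hgidx : gidx χ' u = i0 := by
    apply le_antisymm
    · exact Nat.sInf_le hmem0
    · have hne' : {i | χ' (u⁻¹ * of i) = true}.Nonempty := ⟨i0, hmem0⟩
      have hmem : χ' (u⁻¹ * of (gidx χ' u)) = true := Nat.sInf_mem hne'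
      by_contra hcon
      push_neg at hcon
      rw [h_u _ (le_of_lt hcon)] at hmem
      rw [hspec.2 _ hcon] at hmem
      exact Bool.false_ne_true hmem
  show cIdx χ' (of (r χ' a) * of (r χ' b)) = cIdx χ u
  rw [hra a hraM, hra b hrbM]
  unfold cIdx
  rw [hgidx, hcount i0 (by omega)]

end Cont

end Stmt18

namespace Stmt18
set_option linter.unusedSectionVars false
open FreeGroup

noncomputable def mulPairs (G : ℕ × ℕ → ℕ) (h : IsGroupOp G) (c : ℕ → ℕ) :
    List (ℕ × Bool) → List (ℕ × ℕ)
  | [] => []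
  | x :: L => (letterVal G h c x, wEval G h c L) :: mulPairs G h c L

noncomputable def wordPairs (G : ℕ × ℕ → ℕ) (h : IsGroupOp G) (c : ℕ → ℕ)
    (L : List (ℕ × Bool)) : List (ℕ × ℕ) :=
  (oneG G h, oneG G h) :: ((L.map fun x => (c x.1, invG G h (c x.1))) ++ mulPairs G h c L)

section Stable

variable (G : ℕ × ℕ → ℕ) (h : IsGroupOp G) (G₁ : ℕ × ℕ → ℕ) (h₁ : IsGroupOp G₁) (c : ℕ → ℕ)

lemma G_one_one : G (oneG G h, oneG G h) = oneG G h := (h.2.choose_spec.1 _).1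

lemma G_inv (a : ℕ) : G (a, invG G h a) = oneG G h := (h.2.choose_spec.2 a).choose_spec.1

lemma one_stable (hone : G₁ (oneG G h, oneG G h) = oneG G h) : oneG G₁ h₁ = oneG G h := by
  letI := groupOfOp G₁ h₁
  have key : NatCarrier.mk (oneG G h) * NatCarrier.mk (oneG G h) = NatCarrier.mk (oneG G h) := by
    show NatCarrier.mk (G₁ (oneG G h, oneG G h)) = NatCarrier.mk (oneG G h)
    rw [hone]
  have h2 : NatCarrier.mk (oneG G h) = 1 := (mul_eq_right).mp key
  have h3 : (1 : NatCarrier) = NatCarrier.mk (oneG G₁ h₁) := rfl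
  rw [h3] at h2
  exact (congrArg id h2).symm

lemma inv_stable (a : ℕ) (hone : G₁ (oneG G h, oneG G h) = oneG G h)
    (hinva : G₁ (a, invG G h a) = G (a, invG G h a)) : invG G₁ h₁ a = invG G h a := by
  letI := groupOfOp G₁ h₁
  have key : NatCarrier.mk a * NatCarrier.mk (invG G h a) = 1 := by
    show NatCarrier.mk (G₁ (a, invG G h a)) = 1
    rw [hinva, G_inv G h a]
    show NatCarrier.mk (oneG G h) = NatCarrier.mk (oneG G₁ h₁)
    rw [one_stable G h G₁ h₁ hone]
  have h2 : (NatCarrier.mk a)⁻¹ = NatCarrier.mk (invG G h a) := inv_eq_of_mul_eq_one_right key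
  have h3 : (NatCarrier.mk a)⁻¹ = NatCarrier.mk (invG G₁ h₁ a) := rfl
  rw [h3] at h2
  exact congrArg id h2

lemma wEval_stable (L : List (ℕ × Bool))
    (hyp : ∀ q ∈ wordPairs G h c L, G₁ q = G q) : wEval G₁ h₁ c L = wEval G h c L := by
  have hone : G₁ (oneG G h, oneG G h) = oneG G h := by
    rw [hyp _ (by unfold wordPairs; exact List.mem_cons_self)]
    exact G_one_one G h
  induction L with
  | nil => exact one_stable G h G₁ h₁ hone
  | cons x L ih =>
    have hsub : ∀ q ∈ wordPairs G h c L, q ∈ wordPairs G h c (x :: L) := by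
      intro q hq
      unfold wordPairs at hq ⊢
      rcases List.mem_cons.mp hq with h1 | h1
      · exact List.mem_cons.mpr (Or.inl h1)
      · rcases List.mem_append.mp h1 with h2 | h2
        · refine List.mem_cons.mpr (Or.inr (List.mem_append.mpr (Or.inl ?_)))
          rw [List.map_cons]
          exact List.mem_cons.mpr (Or.inr h2)
        · refine List.mem_cons.mpr (Or.inr (List.mem_append.mpr (Or.inr ?_)))
          show q ∈ (letterVal G h c x, wEval G h c L) :: mulPairs G h c L
          exact List.mem_cons.mpr (Or.inr h2)
    have ihL := ih (fun q hq => hyp q (hsub q hq))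
    show G₁ (letterVal G₁ h₁ c x, wEval G₁ h₁ c L) = G (letterVal G h c x, wEval G h c L)
    have hlv : letterVal G₁ h₁ c x = letterVal G h c x := by
      obtain ⟨i, b⟩ := x
      cases b
      · show invG G₁ h₁ (c i) = invG G h (c i)
        apply inv_stable G h G₁ h₁ _ hone
        apply hyp
        unfold wordPairs
        refine List.mem_cons.mpr (Or.inr (List.mem_append.mpr (Or.inl ?_)))
        rw [List.map_cons]
        exact List.mem_cons.mpr (Or.inl rfl)
      · rfl
    rw [hlv, ihL]
    apply hyp
    unfold wordPairs
    refine List.mem_cons.mpr (Or.inr (List.mem_append.mpr (Or.inr ?_)))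
    show _ ∈ (letterVal G h c x, wEval G h c L) :: mulPairs G h c L
    exact List.mem_cons.mpr (Or.inl rfl)

end Stable

end Stmt18

namespace Stmt18
set_option linter.unusedSectionVars false
open FreeGroup

/-- coset index of the `i`-th generator. -/
noncomputable def cN (χ : FreeGroup ℕ → Bool) : ℕ → ℕ := fun i => cIdx χ (of i)

section Glue

variable {χ : FreeGroup ℕ → Bool} {H : Subgroup (FreeGroup ℕ)}
  (hn : H.Normal)
  (hH : ∀ u, u ∈ H ↔ χ u = true)
  (hinf : ∀ u : FreeGroup ℕ, {i : ℕ | χ (u⁻¹ * of i) = true}.Infinite)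
  (hdisc : ∃ f : ℕ → FreeGroup ℕ, ∀ i j, i ≠ j → χ (f i * (f j)⁻¹) = false)

include hn hH hinf hdisc

lemma cN_m2 (a : ℕ) : cN χ (r χ a) = a := cIdx_of_r hn hH hinf hdisc a

omit hn hdisc in
lemma cN_m3 (i : ℕ) : r χ (cN χ i) ≤ i := by
  have h1 : r χ (cIdx χ (of i)) = gidx χ (of i) := r_cIdx hH (of i) (hinf (of i)).nonempty
  show r χ (cIdx χ (of i)) ≤ i
  rw [h1]
  apply Nat.sInf_le
  simp only [Set.mem_setOf_eq, inv_mul_cancel]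
  exact chi_one hH

lemma cN_fib (a : ℕ) : {i : ℕ | cN χ i = a}.Infinite := by
  apply Set.Infinite.mono _ (hinf (of (r χ a)))
  intro i hi
  simp only [Set.mem_setOf_eq] at hi ⊢
  have hmem : (of (r χ a))⁻¹ * of i ∈ H := (hH _).mpr hi
  show cIdx χ (of i) = a
  rw [← cIdx_coset hH hmem]
  exact cIdx_of_r hn hH hinf hdisc a

omit hn hdisc in
lemma cIdx_mul' (hn : H.Normal) (hdisc : ∃ f : ℕ → FreeGroup ℕ, ∀ i j, i ≠ j →
    χ (f i * (f j)⁻¹) = false) (u w : FreeGroup ℕ) :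
    cIdx χ (u * w) = op χ (cIdx χ u) (cIdx χ w) := by
  have h1 : (QuotientGroup.mk (of (r χ (cIdx χ u))) : FreeGroup ℕ ⧸ H) = QuotientGroup.mk u :=
    mk_r_eInv hH hinf (QuotientGroup.mk u)
  have h2 : (QuotientGroup.mk (of (r χ (cIdx χ w))) : FreeGroup ℕ ⧸ H) = QuotientGroup.mk w :=
    mk_r_eInv hH hinf (QuotientGroup.mk w)
  rw [op_eq hn hH hinf hdisc, h1, h2, ← QuotientGroup.mk_mul]
  rfl

lemma oneG_cIdx :
    oneG (fun p => op χ p.1 p.2) (op_isGroupOp hn hH hinf hdisc) = cIdx χ 1 := by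
  letI := groupOfOp (fun p => op χ p.1 p.2) (op_isGroupOp hn hH hinf hdisc)
  have h1 : cIdx χ ((1 : FreeGroup ℕ) * 1) = op χ (cIdx χ 1) (cIdx χ 1) :=
    cIdx_mul' hH hinf hn hdisc 1 1
  rw [one_mul] at h1
  have key : NatCarrier.mk (cIdx χ 1) * NatCarrier.mk (cIdx χ 1) = NatCarrier.mk (cIdx χ 1) := by
    show NatCarrier.mk (op χ (cIdx χ 1) (cIdx χ 1)) = NatCarrier.mk (cIdx χ 1)
    rw [← h1]
  have h2 : NatCarrier.mk (cIdx χ 1) = 1 := mul_eq_right.mp key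
  have h3 : (1 : NatCarrier) = NatCarrier.mk (oneG (fun p => op χ p.1 p.2)
    (op_isGroupOp hn hH hinf hdisc)) := rfl
  rw [h3] at h2
  exact (congrArg id h2).symm

lemma wEval_cIdx (u : FreeGroup ℕ) :
    wEval (fun p => op χ p.1 p.2) (op_isGroupOp hn hH hinf hdisc) (cN χ) u.toWord
      = cIdx χ u := by
  letI := groupOfOp (fun p => op χ p.1 p.2) (op_isGroupOp hn hH hinf hdisc)
  have hlift := lift_eq_wEval (fun p => op χ p.1 p.2) (op_isGroupOp hn hH hinf hdisc) (cN χ) u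
  have hmul : ∀ v w : FreeGroup ℕ, NatCarrier.mk (cIdx χ (v * w))
      = NatCarrier.mk (cIdx χ v) * NatCarrier.mk (cIdx χ w) := by
    intro v w
    show NatCarrier.mk (cIdx χ (v * w)) = NatCarrier.mk (op χ (cIdx χ v) (cIdx χ w))
    rw [cIdx_mul' hH hinf hn hdisc]
  have hE : (FreeGroup.lift fun i => NatCarrier.mk (cN χ i))
      = MonoidHom.mk' (fun v => NatCarrier.mk (cIdx χ v)) hmul :=
    FreeGroup.ext_hom _ _ (fun i => by rw [FreeGroup.lift_apply_of]; rfl)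
  rw [hE] at hlift
  have h2 : NatCarrier.mk (cIdx χ u) = NatCarrier.mk (wEval (fun p => op χ p.1 p.2)
      (op_isGroupOp hn hH hinf hdisc) (cN χ) u.toWord) := hlift
  exact (congrArg id h2).symm

lemma kerChi_eq_chi (u : FreeGroup ℕ) :
    kerChi (fun p => op χ p.1 p.2) (op_isGroupOp hn hH hinf hdisc) (cN χ) u = χ u := by
  unfold kerChi
  rw [wEval_cIdx hn hH hinf hdisc u, oneG_cIdx hn hH hinf hdisc]
  cases hcase : χ u
  · rw [decide_eq_false_iff_not]
    intro heq
    have h1 : u⁻¹ * of (r χ (cIdx χ u)) ∈ H := chi_r_cIdx hH u (hinf u).nonempty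
    have h2 : (1 : FreeGroup ℕ)⁻¹ * of (r χ (cIdx χ 1)) ∈ H := chi_r_cIdx hH 1 (hinf 1).nonempty
    rw [inv_one, one_mul] at h2
    rw [heq] at h1
    have h3 : u⁻¹ ∈ H := by
      have := H.mul_mem h1 (H.inv_mem h2)
      simpa [mul_assoc] using this
    have h4 : u ∈ H := by simpa using H.inv_mem h3
    rw [hH] at h4
    rw [hcase] at h4
    exact Bool.false_ne_true h4
  · rw [decide_eq_true_iff]
    have hu : u ∈ H := (hH u).mpr hcase
    have : u⁻¹ * 1 ∈ H := by simpa using H.inv_mem hu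
    exact cIdx_coset hH this

end Glue

end Stmt18

namespace Stmt18
set_option linter.unusedSectionVars false
open FreeGroup

abbrev Dsub : Type := {N : MarkedSpace // N ∈ Dset}

lemma hH_of (N : Dsub) : ∀ u, u ∈ N.1.2.choose ↔ N.1.1 u = true := by
  intro u
  have hcar := N.1.2.choose_spec.2
  rw [Set.ext_iff] at hcar
  have := hcar u
  simpa [charSet, SetLike.mem_coe] using this

noncomputable def bigF (N : Dsub) : GroupOpSpace :=
  ⟨fun p => op N.1.1 p.1 p.2,
    op_isGroupOp N.1.2.choose_spec.1 (hH_of N) N.2.2 N.2.1⟩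

lemma basic_mem_nhds (N : Dsub) (l : List (FreeGroup ℕ)) :
    {N' : Dsub | ∀ w ∈ l, N'.1.1 w = N.1.1 w} ∈ nhds N := by
  have hopen : IsOpen {N' : Dsub | ∀ w ∈ l, N'.1.1 w = N.1.1 w} := by
    have heq : {N' : Dsub | ∀ w ∈ l, N'.1.1 w = N.1.1 w}
        = ⋂ w ∈ {w | w ∈ l}, {N' : Dsub | N'.1.1 w = N.1.1 w} := by
      ext N'; simp
    rw [heq]
    apply Set.Finite.isOpen_biInter (l.finite_toSet)
    intro w hw
    have hc : Continuous fun N' : Dsub => N'.1.1 w :=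
      (continuous_apply w).comp (continuous_subtype_val.comp continuous_subtype_val)
    have heq2 : {N' : Dsub | N'.1.1 w = N.1.1 w}
        = (fun N' : Dsub => N'.1.1 w) ⁻¹' {N.1.1 w} := rfl
    rw [heq2]
    exact (isOpen_discrete _).preimage hc
  exact hopen.mem_nhds (fun w hw => rfl)

lemma bigF_continuous : Continuous bigF := by
  have hpi : Continuous fun N : Dsub => (fun p : ℕ × ℕ => op N.1.1 p.1 p.2) := by
    apply continuous_pi
    intro p
    rw [continuous_iff_continuousAt]
    intro N
    unfold ContinuousAt
    rw [nhds_discrete ℕ]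
    rw [Filter.tendsto_pure]
    rw [Filter.eventually_iff]
    apply Filter.mem_of_superset (basic_mem_nhds N (contWords N.1.1 p.1 p.2))
    intro N' hN'
    exact op_congr N.1.2.choose_spec.1 (hH_of N) N.2.2 N.2.1 p.1 p.2 N'.1.1 hN'
  exact hpi.subtype_mk _

lemma opT_mem_nhds (Gs : GroupOpSpace) (T : List (ℕ × ℕ)) :
    {G' : GroupOpSpace | ∀ q ∈ T, G'.1 q = Gs.1 q} ∈ nhds Gs := by
  have hopen : IsOpen {G' : GroupOpSpace | ∀ q ∈ T, G'.1 q = Gs.1 q} := by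
    have heq : {G' : GroupOpSpace | ∀ q ∈ T, G'.1 q = Gs.1 q}
        = ⋂ q ∈ {q | q ∈ T}, {G' : GroupOpSpace | G'.1 q = Gs.1 q} := by
      ext G'; simp
    rw [heq]
    apply Set.Finite.isOpen_biInter (T.finite_toSet)
    intro q hq
    have hc : Continuous fun G' : GroupOpSpace => G'.1 q :=
      (continuous_apply q).comp continuous_subtype_val
    have heq2 : {G' : GroupOpSpace | G'.1 q = Gs.1 q}
        = (fun G' : GroupOpSpace => G'.1 q) ⁻¹' {Gs.1 q} := rfl
    rw [heq2]
    exact (isOpen_discrete _).preimage hc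
  exact hopen.mem_nhds (fun q hq => rfl)

end Stmt18

namespace Stmt18
set_option linter.unusedSectionVars false
open FreeGroup

lemma bigF_kerChi (Gs : GroupOpSpace) (c m : ℕ → ℕ) (hm1 : StrictMono m)
    (hm2 : ∀ a, c (m a) = a) (hm3 : ∀ i, m (c i) ≤ i)
    (hfib : ∀ a, {i : ℕ | c i = a}.Infinite) :
    bigF ⟨⟨kerChi Gs.1 Gs.2 c, kerChi_isChar Gs.1 Gs.2 c⟩,
      ⟨kerChi_disc Gs.1 Gs.2 c m hm2, fun u => kerChi_inf Gs.1 Gs.2 c hfib u⟩⟩ = Gs := by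
  apply Subtype.ext
  funext p
  show op (kerChi Gs.1 Gs.2 c) p.1 p.2 = Gs.1 p
  rw [op_kerChi Gs.1 Gs.2 c m hm1 hm2 hm3 p.1 p.2]

lemma m0_mono : StrictMono (fun a : ℕ => a * a + a) := by
  intro a b hab
  have : a * a ≤ b * b := Nat.mul_le_mul hab.le hab.le
  simp only
  omega

lemma c0_m2 (a : ℕ) : (Nat.unpair (a * a + a)).1 = a := by
  have h : a * a + a = Nat.pair a 0 := by simp [Nat.pair]
  rw [h, Nat.unpair_pair]

lemma pair_ge (a b : ℕ) : a * a + a ≤ Nat.pair a b := by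
  rw [Nat.pair]
  split
  · have : a * a ≤ b * b := Nat.mul_le_mul (by omega) (by omega)
    omega
  · omega

lemma c0_m3 (i : ℕ) :
    (Nat.unpair i).1 * (Nat.unpair i).1 + (Nat.unpair i).1 ≤ i := by
  conv_rhs => rw [← Nat.pair_unpair i]
  exact pair_ge _ _

lemma c0_fib (a : ℕ) : {i : ℕ | (Nat.unpair i).1 = a}.Infinite := by
  apply Set.infinite_of_injective_forall_mem (f := fun b => Nat.pair a b)
  · intro x y hxy
    have := congrArg (fun n => (Nat.unpair n).2) hxy
    simpa [Nat.unpair_pair] using this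
  · intro b
    simp [Nat.unpair_pair]

lemma bigF_surjective : Function.Surjective bigF := by
  intro Gs
  exact ⟨_, bigF_kerChi Gs (fun i => (Nat.unpair i).1) (fun a => a * a + a)
    m0_mono c0_m2 c0_m3 c0_fib⟩

lemma bigF_open : IsOpenMap bigF := by
  apply IsOpenMap.of_nhds_le
  intro N W hW
  rw [Filter.mem_map, mem_nhds_subtype] at hW
  obtain ⟨t₁, ht₁, hsub₁⟩ := hW
  have ht₁ := (mem_nhds_subtype (s := {χ : FreeGroup ℕ → Bool | IsNormalSubgroupChar χ}) ..).mp ht₁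
  obtain ⟨t₂, ht₂, hsub₂⟩ := ht₁
  rw [mem_nhds_iff] at ht₂
  obtain ⟨o, ho_sub, ho_open, ho_mem⟩ := ht₂
  obtain ⟨I, uu, hIu, hpi⟩ := (isOpen_pi_iff.mp ho_open) _ ho_mem
  -- data of N
  have hnN := N.1.2.choose_spec.1
  have hHN := hH_of N
  have hinfN := N.2.2
  have hdiscN := N.2.1
  have hm1 : StrictMono (r N.1.1) := r_strictMono hnN hHN hinfN hdiscN
  have hm2 : ∀ a, cN N.1.1 (r N.1.1 a) = a := cN_m2 hnN hHN hinfN hdiscN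
  have hm3 : ∀ i, r N.1.1 (cN N.1.1 i) ≤ i := cN_m3 hHN hinfN
  have hfib : ∀ a, {i : ℕ | cN N.1.1 i = a}.Infinite := cN_fib hnN hHN hinfN hdiscN
  set Gb : ℕ × ℕ → ℕ := fun p => op N.1.1 p.1 p.2 with hGb
  have hb : IsGroupOp Gb := (bigF N).2
  set T : List (ℕ × ℕ) := I.toList.flatMap fun w => wordPairs Gb hb (cN N.1.1) w.toWord with hT
  apply Filter.mem_of_superset (opT_mem_nhds (bigF N) T)
  intro G' hG'
  simp only [Set.mem_setOf_eq] at hG'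
  -- build the preimage point
  set χ' : FreeGroup ℕ → Bool := kerChi G'.1 G'.2 (cN N.1.1) with hχ'
  have hmemD : (⟨χ', kerChi_isChar G'.1 G'.2 (cN N.1.1)⟩ : MarkedSpace) ∈ Dset :=
    ⟨kerChi_disc G'.1 G'.2 (cN N.1.1) (r N.1.1) hm2,
     fun u => kerChi_inf G'.1 G'.2 (cN N.1.1) hfib u⟩
  set N' : Dsub := ⟨⟨χ', kerChi_isChar G'.1 G'.2 (cN N.1.1)⟩, hmemD⟩ with hN'
  have hFN' : bigF N' = G' :=
    bigF_kerChi G' (cN N.1.1) (r N.1.1) hm1 hm2 hm3 hfib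
  -- agreement of χ' with N.1.1 on I
  have hagree : ∀ w ∈ I, χ' w = N.1.1 w := by
    intro w hw
    have hyp : ∀ q ∈ wordPairs Gb hb (cN N.1.1) w.toWord, G'.1 q = Gb q := by
      intro q hq
      apply hG'
      rw [hT, List.mem_flatMap]
      exact ⟨w, Finset.mem_toList.mpr hw, hq⟩
    have hone : G'.1 (oneG Gb hb, oneG Gb hb) = oneG Gb hb := by
      rw [hyp _ (by unfold wordPairs; exact List.mem_cons_self)]
      exact G_one_one Gb hb
    have hev : wEval G'.1 G'.2 (cN N.1.1) w.toWord = wEval Gb hb (cN N.1.1) w.toWord :=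
      wEval_stable Gb hb G'.1 G'.2 (cN N.1.1) w.toWord hyp
    have hod : oneG G'.1 G'.2 = oneG Gb hb := one_stable Gb hb G'.1 G'.2 hone
    show kerChi G'.1 G'.2 (cN N.1.1) w = N.1.1 w
    unfold kerChi
    rw [hev, hod]
    exact kerChi_eq_chi hnN hHN hinfN hdiscN w
  -- N' lies in the given neighborhood
  have hχ't₂ : (χ' : FreeGroup ℕ → Bool) ∈ t₂ := by
    apply ho_sub
    apply hpi
    intro w hw
    rw [hagree w hw]
    exact (hIu w hw).2
  have hN'W : N' ∈ bigF ⁻¹' W := hsub₁ (hsub₂ hχ't₂)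
  have : bigF N' ∈ W := hN'W
  rw [hFN'] at this
  exact this

end Stmt18

theorem stmt_18 :
    ∃ f : {N : MarkedSpace // N ∈ Dset} → GroupOpSpace,
      Continuous f ∧ IsOpenMap f ∧ Function.Surjective f ∧
      ∀ (N : {N : MarkedSpace // N ∈ Dset}) (H : Subgroup (FreeGroup ℕ)) (hn : H.Normal),
        (H : Set (FreeGroup ℕ)) = charSet N.1.1 → QuotIsoOp H hn (f N).1 (f N).2 := by
  refine ⟨Stmt18.bigF, Stmt18.bigF_continuous, Stmt18.bigF_open, Stmt18.bigF_surjective, ?_⟩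
  intro N H hn hcar
  have hHeq : H = N.1.2.choose := SetLike.ext' (hcar.trans N.1.2.choose_spec.2.symm)
  subst hHeq
  exact Stmt18.quotIso N.1.2.choose_spec.1 (Stmt18.hH_of N) N.2.2 N.2.1
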